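/- arXiv:0709.2646 — 2 statements merged into one kernel-verified Lean document; each statement's English description precedes it below -/
import Mathlib

section
/- Let P be a finite poset on [n], let P_s = P ∪ {s} be the poset on {s} ∪ [n] obtained by adding an element s incomparable to all elements of [n], and let λ = (λ_s, λ_1, ..., λ_n) ∈ ℝ^{n+1}_{>0}. Let Q be any partial order on {s} ∪ [n] refining P_s. Then the probability that a CT-CBN sample from P_s is compatible with Q is ∫_{{t ∈ ℝ^{n+1}_{>0} : t compatible with Q}} f_{P_s,λ}(t) dt = λ_s λ_1 ⋯ λ_n · Σ_{C ∈ 𝒞(J(Q))} ∏_{k=0}^{n} 1/λ_{Exit(C_k)}, where the sum runs over all maximal chains C = (C_0, ..., C_{n+1}) in the distributive lattice J(Q) of order ideals of Q, and Exit is taken with respect to P_s. -/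
open MeasureTheory

/-- The poset `P_s = P ∪ {s}` on `{s} ∪ [n]`, modeled on `Option (Fin n)` with `s = none`:
the element `s` is incomparable to all others, and `P` is kept on `[n]`. -/
def liftRel {n : ℕ} (P : Fin n → Fin n → Prop) :
    Option (Fin n) → Option (Fin n) → Prop
  | some i, some j => P i j
  | _, _ => False

/-- The maximum of `t` over the strict predecessors of `a`, with the convention that the
maximum over the empty set is `0`. -/
noncomputable def maxPa {α : Type*} (R : α → α → Prop) (t : α → ℝ) (a : α) : ℝ :=
  sSup (insert 0 (t '' {b | R b a}))

/-- The CT-CBN density `f_{P_s,λ}` on `ℝ^{{s}∪[n]}`. -/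
noncomputable def ctcbnDensity {α : Type*} [Fintype α] (R : α → α → Prop) (lam : α → ℝ)
    (t : α → ℝ) : ℝ :=
  if ∀ a, maxPa R t a < t a then
    ∏ a, lam a * Real.exp (-(lam a) * (t a - maxPa R t a))
  else 0

/-- `S` is an order ideal (lower set) of the strict order `R`. -/
def IsOrderIdeal {α : Type*} (R : α → α → Prop) (S : Finset α) : Prop :=
  ∀ p q : α, R p q → q ∈ S → p ∈ S

open scoped Classical in
/-- `Exit(S)`: the events not in `S` that can occur next with respect to `R`. -/
noncomputable def exitSet {α : Type*} [Fintype α] (R : α → α → Prop) (S : Finset α) :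
    Finset α :=
  Finset.univ.filter (fun j => j ∉ S ∧ IsOrderIdeal R (insert j S))

/-- `λ_T = Σ_{j ∈ T} λ_j`. -/
def rateSum {α : Type*} (lam : α → ℝ) (T : Finset α) : ℝ := ∑ j ∈ T, lam j

/-- A maximal chain `∅ = C_0 ⊂ ⋯ ⊂ C_{n+1} = {s} ∪ [n]` in the lattice `J(Q)` of order
ideals of a partial order `Q` on `{s} ∪ [n]`. -/
def IsMaxChainJ {n : ℕ} (Q : Option (Fin n) → Option (Fin n) → Prop)
    (C : Fin (n + 2) → Finset (Option (Fin n))) : Prop :=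
  (∀ k, IsOrderIdeal Q (C k)) ∧ (∀ k : Fin (n + 2), (C k).card = (k : ℕ)) ∧
  (∀ k : Fin (n + 1), C k.castSucc ⊆ C k.succ)

open scoped Classical in
/-- The (finite) set `𝒞(J(Q))` of maximal chains in `J(Q)`. -/
noncomputable def maxChainsJ {n : ℕ} (Q : Option (Fin n) → Option (Fin n) → Prop) :
    Finset (Fin (n + 2) → Finset (Option (Fin n))) :=
  Finset.univ.filter (fun C => IsMaxChainJ Q C)

/-! ### Auxiliary order lemmas -/

open scoped Classical

section OrderAux

variable {α : Type*} [Fintype α] {R : α → α → Prop}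

lemma maxPa_eq_max' (t : α → ℝ) (a : α) :
    maxPa R t a = (insert (0:ℝ) ((Finset.univ.filter fun b => R b a).image t)).max'
      (Finset.insert_nonempty _ _) := by
  rw [maxPa, ← Finset.Nonempty.csSup_eq_max']
  congr 1
  simp [Set.ext_iff]

lemma maxPa_lt_iff (t : α → ℝ) (a : α) :
    maxPa R t a < t a ↔ 0 < t a ∧ ∀ b, R b a → t b < t a := by
  rw [maxPa_eq_max', Finset.max'_lt_iff]
  constructor
  · intro h
    exact ⟨h 0 (Finset.mem_insert_self _ _),
      fun b hb => h (t b) (Finset.mem_insert_of_mem (Finset.mem_image_of_mem t (by simp [hb])))⟩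
  · rintro ⟨h0, h⟩ y hy
    rcases Finset.mem_insert.1 hy with rfl | hy
    · exact h0
    · obtain ⟨b, hb, rfl⟩ := Finset.mem_image.1 hy
      exact h b (by simpa using hb)

lemma mem_exitSet_iff (hirr : ∀ a, ¬ R a a) {S : Finset α} (hS : IsOrderIdeal R S) (a : α) :
    a ∈ exitSet R S ↔ a ∉ S ∧ ∀ b, R b a → b ∈ S := by
  simp only [exitSet, Finset.mem_filter, Finset.mem_univ, true_and]
  constructor
  · rintro ⟨ha, hins⟩
    refine ⟨ha, fun b hb => ?_⟩
    have := hins b a hb (Finset.mem_insert_self a S)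
    rcases Finset.mem_insert.1 this with rfl | h
    · exact absurd hb (hirr _)
    · exact h
  · rintro ⟨ha, hpar⟩
    refine ⟨ha, fun p q hpq hq => ?_⟩
    rcases Finset.mem_insert.1 hq with rfl | hq
    · exact Finset.mem_insert_of_mem (hpar p hpq)
    · exact Finset.mem_insert_of_mem (hS p q hpq hq)

end OrderAux

/-! ### Combinatorics: chains vs linear extensions -/

section Comb

variable {n : ℕ}

/-- prefix set of a linear order -/
noncomputable def preF (σ : Fin (n+1) ≃ Option (Fin n)) (j : ℕ) : Finset (Option (Fin n)) :=
  Finset.univ.filter (fun a => (σ.symm a : ℕ) < j)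

lemma mem_preF {σ : Fin (n+1) ≃ Option (Fin n)} {j : ℕ} {a : Option (Fin n)} :
    a ∈ preF σ j ↔ (σ.symm a : ℕ) < j := by simp [preF]

/-- linear extensions of Q -/
noncomputable def extSet (Q : Option (Fin n) → Option (Fin n) → Prop) :
    Finset (Fin (n+1) ≃ Option (Fin n)) :=
  Finset.univ.filter (fun σ => ∀ a b, Q a b → σ.symm a < σ.symm b)

lemma mem_extSet {Q : Option (Fin n) → Option (Fin n) → Prop}
    {σ : Fin (n+1) ≃ Option (Fin n)} :
    σ ∈ extSet Q ↔ ∀ a b, Q a b → σ.symm a < σ.symm b := by simp [extSet]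

lemma card_filter_val_lt {j : ℕ} (hj : j ≤ n + 1) :
    (Finset.univ.filter fun k : Fin (n+1) => (k : ℕ) < j).card = j := by
  have key : (Finset.univ.filter fun k : Fin (n+1) => (k : ℕ) < j)
      = (Finset.univ : Finset (Fin j)).image (Fin.castLE hj) := by
    ext k
    simp only [Finset.mem_filter, Finset.mem_univ, true_and, Finset.mem_image]
    constructor
    · intro hk; exact ⟨⟨(k : ℕ), hk⟩, by ext; simp⟩
    · rintro ⟨i, -, rfl⟩; simpa using i.isLt
  rw [key, Finset.card_image_of_injective _ (Fin.castLE_injective hj)]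
  simp

lemma card_preF {σ : Fin (n+1) ≃ Option (Fin n)} {j : ℕ} (hj : j ≤ n + 1) :
    (preF σ j).card = j := by
  have : preF σ j = (Finset.univ.filter fun k : Fin (n+1) => (k : ℕ) < j).image σ := by
    ext a
    simp only [mem_preF, Finset.mem_image, Finset.mem_filter, Finset.mem_univ, true_and]
    constructor
    · intro h; exact ⟨σ.symm a, h, σ.apply_symm_apply a⟩
    · rintro ⟨k, hk, rfl⟩; simpa using hk
  rw [this, Finset.card_image_of_injective _ σ.injective, card_filter_val_lt hj]

noncomputable def chainOf (σ : Fin (n+1) ≃ Option (Fin n)) :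
    Fin (n + 2) → Finset (Option (Fin n)) := fun k => preF σ (k : ℕ)

lemma chainOf_mem {Q : Option (Fin n) → Option (Fin n) → Prop}
    {σ : Fin (n+1) ≃ Option (Fin n)} (hσ : σ ∈ extSet Q) :
    chainOf σ ∈ maxChainsJ Q := by
  rw [mem_extSet] at hσ
  simp only [maxChainsJ, Finset.mem_filter, Finset.mem_univ, true_and]
  refine ⟨fun k => ?_, fun k => card_preF (by omega), fun k => ?_⟩
  · intro p q hpq hq
    rw [chainOf, mem_preF] at *
    exact lt_trans (hσ p q hpq) hq
  · intro a ha
    rw [chainOf, mem_preF] at *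
    simp only [Fin.coe_castSucc] at ha
    simp only [Fin.val_succ]
    omega

lemma chainOf_injOn {Q : Option (Fin n) → Option (Fin n) → Prop}
    {σ σ' : Fin (n+1) ≃ Option (Fin n)}
    (h : chainOf σ = chainOf σ') : σ = σ' := by
  have hsymm : ∀ a, σ.symm a = σ'.symm a := by
    intro a
    have key : ∀ (τ τ' : Fin (n+1) ≃ Option (Fin n)), chainOf τ = chainOf τ' →
        (τ'.symm a : ℕ) ≤ (τ.symm a : ℕ) := by
      intro τ τ' hττ
      have h1 : a ∈ chainOf τ ⟨(τ.symm a : ℕ) + 1, by omega⟩ := by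
        rw [chainOf, mem_preF]
        simp only [Fin.val_mk]
        omega
      rw [hττ, chainOf, mem_preF] at h1
      simp only [Fin.val_mk] at h1
      omega
    have := key σ σ' h
    have := key σ' σ h.symm
    exact Fin.ext (by omega)
  have : σ.symm = σ'.symm := Equiv.ext hsymm
  calc σ = σ.symm.symm := rfl
  _ = σ'.symm.symm := by rw [this]
  _ = σ' := rfl

lemma chainOf_surj {Q : Option (Fin n) → Option (Fin n) → Prop}
    (hQirr : ∀ a, ¬ Q a a)
    {C : Fin (n + 2) → Finset (Option (Fin n))} (hC : C ∈ maxChainsJ Q) :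
    ∃ σ ∈ extSet Q, chainOf σ = C := by
  simp only [maxChainsJ, Finset.mem_filter, Finset.mem_univ, true_and] at hC
  obtain ⟨hid, hcard, hsub⟩ := hC
  -- monotonicity of the chain
  have hmono : ∀ k l : Fin (n + 2), k ≤ l → C k ⊆ C l := by
    have D : ∀ (l j : Fin (n+2)), (j : ℕ) ≤ (l : ℕ) → C j ⊆ C l := by
      intro l
      induction l using Fin.induction with
      | zero =>
        intro j hl
        have : j = 0 := Fin.ext (by simpa using hl)
        rw [this]
      | succ i ih =>
        intro j hl
        rcases Nat.lt_or_ge (j : ℕ) ((i.succ : Fin (n+2)) : ℕ) with h' | h'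
        · have h1 : C j ⊆ C i.castSucc := by
            apply ih
            simp only [Fin.coe_castSucc]
            simp only [Fin.val_succ] at h'
            omega
          exact h1.trans (hsub i)
        · have : j = i.succ := Fin.ext (by omega)
          rw [this]
    intro k l hkl
    exact D l k hkl
  -- the new element at each step
  have hstep : ∀ k : Fin (n+1), ∃ a, C k.succ \ C k.castSucc = {a} := by
    intro k
    apply Finset.card_eq_one.mp
    rw [Finset.card_sdiff_of_subset (hsub k), hcard, hcard, Fin.val_succ, Fin.coe_castSucc]
    omega
  choose f hf using hstep
  have hf_mem : ∀ k, f k ∈ C k.succ ∧ f k ∉ C k.castSucc := by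
    intro k
    have : f k ∈ C k.succ \ C k.castSucc := by rw [hf k]; exact Finset.mem_singleton_self _
    exact ⟨(Finset.mem_sdiff.1 this).1, (Finset.mem_sdiff.1 this).2⟩
  have hinj : Function.Injective f := by
    have key : ∀ k l : Fin (n+1), k < l → f k ≠ f l := by
      intro k l hkl heq
      have h1 : f k ∈ C l.castSucc := by
        apply hmono k.succ l.castSucc
        · simp only [Fin.le_def, Fin.val_succ, Fin.coe_castSucc]
          exact hkl
        · exact (hf_mem k).1
      rw [heq] at h1
      exact (hf_mem l).2 h1
    intro k l heq
    rcases lt_trichotomy k l with h | h | h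
    · exact absurd heq (key k l h)
    · exact h
    · exact absurd heq.symm (key l k h)
  have hbij : Function.Bijective f :=
    (Fintype.bijective_iff_injective_and_card f).mpr ⟨hinj, by simp [Fintype.card_option]⟩
  let σ : Fin (n+1) ≃ Option (Fin n) := Equiv.ofBijective f hbij
  have hσf : ∀ k, σ k = f k := fun k => rfl
  have hσs : ∀ a, f (σ.symm a) = a := fun a => σ.apply_symm_apply a
  -- membership characterization
  have hmem : ∀ (a : Option (Fin n)) (j : Fin (n+2)), a ∈ C j ↔ (σ.symm a : ℕ) < (j : ℕ) := by
    intro a j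
    constructor
    · intro haj
      by_contra hcon
      push_neg at hcon
      have : C j ⊆ C (σ.symm a).castSucc := by
        apply hmono
        simpa [Fin.le_def] using hcon
      have h2 := this haj
      exact (hf_mem (σ.symm a)).2 (by rwa [hσs a])
    · intro hlt
      have h1 : C (σ.symm a).succ ⊆ C j := by
        apply hmono
        simpa [Fin.le_def] using hlt
      have := (hf_mem (σ.symm a)).1
      rw [hσs a] at this
      exact h1 this
  have hext : σ ∈ extSet Q := by
    rw [mem_extSet]
    intro a b hab
    have hbmem : b ∈ C (σ.symm b).succ := by
      rw [hmem]
      simp [Fin.val_succ]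
    have hamem : a ∈ C (σ.symm b).succ := hid _ a b hab hbmem
    rw [hmem] at hamem
    simp only [Fin.val_succ] at hamem
    rcases Nat.lt_or_ge (σ.symm a : ℕ) (σ.symm b : ℕ) with h | h
    · exact h
    · exfalso
      have : (σ.symm a : ℕ) = (σ.symm b : ℕ) := by omega
      have hab' : σ.symm a = σ.symm b := Fin.ext this
      have : a = b := by
        have := congrArg σ hab'
        simpa using this
      subst this
      exact hQirr a hab
  refine ⟨σ, hext, ?_⟩
  funext j
  ext a
  rw [chainOf, mem_preF, hmem]

lemma sum_chains_eq_sum_ext {Q : Option (Fin n) → Option (Fin n) → Prop}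
    (hQirr : ∀ a, ¬ Q a a) (G : (Fin (n + 2) → Finset (Option (Fin n))) → ℝ) :
    ∑ C ∈ maxChainsJ Q, G C = ∑ σ ∈ extSet Q, G (chainOf σ) := by
  symm
  apply Finset.sum_bij (i := fun σ _ => chainOf σ)
  · intro σ hσ; exact chainOf_mem hσ
  · intro σ hσ σ' hσ' h; exact chainOf_injOn (Q := Q) h
  · intro C hC; obtain ⟨σ, hσ, h⟩ := chainOf_surj hQirr hC; exact ⟨σ, hσ, h⟩
  · intro σ hσ; rfl

end Comb

section Analysis

variable {n : ℕ}

noncomputable def lowM (n : ℕ) : Matrix (Fin (n+1)) (Fin (n+1)) ℝ :=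
  Matrix.of fun k j => if j ≤ k then 1 else 0

lemma lowM_triangular : (lowM n).BlockTriangular OrderDual.toDual := by
  intro i j h
  simp only [OrderDual.toDual_lt_toDual] at h
  simp only [lowM, Matrix.of_apply]
  rw [if_neg (not_le.mpr h)]

lemma det_lowM : (lowM n).det = 1 := by
  rw [Matrix.det_of_lowerTriangular _ lowM_triangular]
  simp [lowM]

noncomputable def cumsumE (n : ℕ) : (Fin (n+1) → ℝ) ≃ₗ[ℝ] (Fin (n+1) → ℝ) :=
  (lowM n).toLinearEquiv' ((lowM n).invertibleOfIsUnitDet (by rw [det_lowM]; exact isUnit_one))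

lemma cumsumE_apply (u : Fin (n+1) → ℝ) (k : Fin (n+1)) :
    cumsumE n u k = ∑ j ∈ Finset.Iic k, u j := by
  classical
  have h0 : cumsumE n u = Matrix.toLin' (lowM n) u := rfl
  rw [h0, Matrix.toLin'_apply]
  simp only [Matrix.mulVec, dotProduct, lowM, Matrix.of_apply]
  rw [show (∑ j, (if j ≤ k then (1:ℝ) else 0) * u j)
      = ∑ j, (if j ∈ Finset.Iic k then u j else 0) from
    Finset.sum_congr rfl (fun j _ => by by_cases h : j ≤ k <;> simp [h])]
  rw [Finset.sum_ite_mem, Finset.univ_inter]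

lemma mp_cumsum : MeasurePreserving (⇑(cumsumE n)) volume volume := by
  have hdet : LinearMap.det ((cumsumE n : (Fin (n+1) → ℝ) →ₗ[ℝ] (Fin (n+1) → ℝ))) = 1 := by
    have h1 : ((cumsumE n : (Fin (n+1) → ℝ) →ₗ[ℝ] (Fin (n+1) → ℝ))) = Matrix.toLin' (lowM n) :=
      rfl
    rw [h1, LinearMap.det_toLin', det_lowM]
  constructor
  · exact ((cumsumE n : (Fin (n+1) → ℝ) →ₗ[ℝ] (Fin (n+1) → ℝ))).continuous_of_finiteDimensional.measurable
  · have := Real.map_linearMap_volume_pi_eq_smul_volume_pi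
      (f := (cumsumE n : (Fin (n+1) → ℝ) →ₗ[ℝ] (Fin (n+1) → ℝ))) (by rw [hdet]; norm_num)
    rw [hdet] at this
    simpa using this

noncomputable def cumsumME (n : ℕ) : (Fin (n+1) → ℝ) ≃ᵐ (Fin (n+1) → ℝ) :=
  (cumsumE n).toContinuousLinearEquiv.toHomeomorph.toMeasurableEquiv

noncomputable def Phi (σ : Fin (n+1) ≃ Option (Fin n)) :
    (Fin (n+1) → ℝ) ≃ᵐ (Option (Fin n) → ℝ) :=
  (cumsumME n).trans (MeasurableEquiv.piCongrLeft (fun _ => ℝ) σ)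

lemma cumsumME_apply (u : Fin (n+1) → ℝ) : cumsumME n u = cumsumE n u := rfl

lemma Phi_apply (σ : Fin (n+1) ≃ Option (Fin n)) (u : Fin (n+1) → ℝ) (a : Option (Fin n)) :
    Phi σ u a = ∑ j ∈ Finset.Iic (σ.symm a), u j := by
  have h0 : Phi σ u a = (MeasurableEquiv.piCongrLeft (fun _ => ℝ) σ) (cumsumME n u) a := rfl
  rw [h0]
  have h1 : (MeasurableEquiv.piCongrLeft (fun _ : Option (Fin n) => ℝ) σ) (cumsumME n u) a
      = cumsumME n u (σ.symm a) := by
    conv_lhs => rw [← σ.apply_symm_apply a]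
    exact Equiv.piCongrLeft_apply_apply (fun _ => ℝ) σ _ _
  rw [h1, cumsumME_apply, cumsumE_apply]

lemma Phi_apply' (σ : Fin (n+1) ≃ Option (Fin n)) (u : Fin (n+1) → ℝ) (k : Fin (n+1)) :
    Phi σ u (σ k) = ∑ j ∈ Finset.Iic k, u j := by
  rw [Phi_apply, σ.symm_apply_apply]

lemma mp_Phi (σ : Fin (n+1) ≃ Option (Fin n)) : MeasurePreserving (⇑(Phi σ)) volume volume := by
  have h2 := volume_measurePreserving_piCongrLeft (fun _ : Option (Fin n) => ℝ) σ
  have h1 : MeasurePreserving (⇑(cumsumME n)) volume volume := mp_cumsum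
  exact h2.comp h1

/-! Fin interval lemmas -/

lemma Iic_zero_fin : (Finset.Iic (0 : Fin (n+1))) = {0} := by
  ext j; simp [Fin.le_zero_iff]

lemma Iic_succ_eq (k : Fin n) :
    Finset.Iic (k.succ : Fin (n+1)) = insert k.succ (Finset.Iic k.castSucc) := by
  ext j
  simp only [Finset.mem_Iic, Finset.mem_insert, Fin.le_def, Fin.ext_iff, Fin.val_succ,
    Fin.coe_castSucc]
  omega

lemma succ_not_mem_Iic (k : Fin n) : (k.succ : Fin (n+1)) ∉ Finset.Iic k.castSucc := by
  simp only [Finset.mem_Iic, Fin.le_def, Fin.val_succ, Fin.coe_castSucc]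
  omega

lemma sum_Iic_succ (u : Fin (n+1) → ℝ) (k : Fin n) :
    ∑ j ∈ Finset.Iic k.succ, u j = u k.succ + ∑ j ∈ Finset.Iic k.castSucc, u j := by
  rw [Iic_succ_eq, Finset.sum_insert (succ_not_mem_Iic k)]

/-! sorted region -/

def sortedRegion (σ : Fin (n+1) ≃ Option (Fin n)) : Set (Option (Fin n) → ℝ) :=
  {t | StrictMono (fun k => t (σ k)) ∧ 0 < t (σ 0)}

lemma Phi_pos (σ : Fin (n+1) ≃ Option (Fin n)) (u : Fin (n+1) → ℝ) (hu : ∀ k, 0 < u k)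
    (a : Option (Fin n)) : 0 < Phi σ u a := by
  rw [Phi_apply]
  exact Finset.sum_pos (fun j _ => hu j) ⟨0, Finset.mem_Iic.mpr (Fin.zero_le _)⟩

lemma Phi_strictMono (σ : Fin (n+1) ≃ Option (Fin n)) (u : Fin (n+1) → ℝ) (hu : ∀ k, 0 < u k) :
    StrictMono (fun k => Phi σ u (σ k)) := by
  rw [Fin.strictMono_iff_lt_succ]
  intro i
  simp only [Phi_apply', sum_Iic_succ]
  have := hu i.succ
  linarith

lemma Phi_mem_sortedRegion_iff (σ : Fin (n+1) ≃ Option (Fin n)) (u : Fin (n+1) → ℝ) :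
    Phi σ u ∈ sortedRegion σ ↔ ∀ k, 0 < u k := by
  constructor
  · rintro ⟨hmono, hpos⟩ k
    induction k using Fin.cases with
    | zero =>
      rw [Phi_apply', Iic_zero_fin, Finset.sum_singleton] at hpos
      exact hpos
    | succ i =>
      have h := hmono (Fin.castSucc_lt_succ (i := i))
      simp only [Phi_apply', sum_Iic_succ] at h
      linarith
  · intro hu
    exact ⟨Phi_strictMono σ u hu, Phi_pos σ u hu (σ 0)⟩

lemma Phi_preimage (σ : Fin (n+1) ≃ Option (Fin n)) :
    (⇑(Phi σ)) ⁻¹' (sortedRegion σ) = Set.univ.pi (fun _ => Set.Ioi (0:ℝ)) := by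
  ext u
  simp only [Set.mem_preimage, Set.mem_pi, Set.mem_univ, Set.mem_Ioi, true_implies]
  exact Phi_mem_sortedRegion_iff σ u

lemma measurableSet_sortedRegion (σ : Fin (n+1) ≃ Option (Fin n)) :
    MeasurableSet (sortedRegion σ) := by
  have heq : sortedRegion σ =
      (⋂ (k : Fin (n+1)) (l : Fin (n+1)),
        {t : Option (Fin n) → ℝ | k < l → t (σ k) < t (σ l)}) ∩ {t | 0 < t (σ 0)} := by
    ext t
    simp only [sortedRegion, Set.mem_inter_iff, Set.mem_iInter, Set.mem_setOf_eq]
    exact and_congr_left' ⟨fun h k l hkl => h hkl, fun h a b hab => h a b hab⟩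
  rw [heq]
  apply MeasurableSet.inter
  · refine MeasurableSet.iInter fun k => MeasurableSet.iInter fun l => ?_
    rcases Classical.em (k < l) with h | h
    · have : {t : Option (Fin n) → ℝ | k < l → t (σ k) < t (σ l)}
          = {t | t (σ k) < t (σ l)} := by ext t; simp [h]
      rw [this]
      exact measurableSet_lt (measurable_pi_apply _) (measurable_pi_apply _)
    · have : {t : Option (Fin n) → ℝ | k < l → t (σ k) < t (σ l)} = Set.univ := by
        ext t; simp [h]
      rw [this]; exact MeasurableSet.univ
  · exact measurableSet_lt measurable_const (measurable_pi_apply _)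

/-! one-dimensional and orthant integrals -/

lemma integral_exp_neg_mul_Ioi_zero {c : ℝ} (hc : 0 < c) :
    ∫ x in Set.Ioi (0:ℝ), Real.exp (-(c * x)) = c⁻¹ := by
  have hG : ∀ x : ℝ, (Set.Ioi (0:ℝ)).indicator (fun y => Real.exp (-y)) (c * x)
      = (Set.Ioi (0:ℝ)).indicator (fun x => Real.exp (-(c * x))) x := by
    intro x
    by_cases hx : x ∈ Set.Ioi (0:ℝ)
    · rw [Set.indicator_of_mem (by exact Set.mem_Ioi.mpr (mul_pos hc hx)),
        Set.indicator_of_mem hx]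
    · rw [Set.indicator_of_notMem, Set.indicator_of_notMem hx]
      simp only [Set.mem_Ioi, not_lt] at hx ⊢
      exact mul_nonpos_of_nonneg_of_nonpos hc.le hx
  calc ∫ x in Set.Ioi (0:ℝ), Real.exp (-(c * x))
      = ∫ x, (Set.Ioi (0:ℝ)).indicator (fun x => Real.exp (-(c * x))) x :=
        (integral_indicator measurableSet_Ioi).symm
    _ = ∫ x, (Set.Ioi (0:ℝ)).indicator (fun y => Real.exp (-y)) (c * x) := by simp_rw [hG]
    _ = |c⁻¹| • ∫ y, (Set.Ioi (0:ℝ)).indicator (fun y => Real.exp (-y)) y :=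
        MeasureTheory.Measure.integral_comp_mul_left _ c
    _ = c⁻¹ * ∫ y in Set.Ioi (0:ℝ), Real.exp (-y) := by
        rw [integral_indicator measurableSet_Ioi, abs_of_pos (inv_pos.mpr hc), smul_eq_mul]
    _ = c⁻¹ := by rw [integral_exp_neg_Ioi_zero, mul_one]

lemma integrable_indicator_exp {c : ℝ} (hc : 0 < c) :
    Integrable ((Set.Ioi (0:ℝ)).indicator (fun x => Real.exp (-(c * x)))) := by
  rw [integrable_indicator_iff measurableSet_Ioi]
  have := exp_neg_integrableOn_Ioi 0 hc
  simpa [neg_mul] using this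

lemma indicator_pi_prod (c : Fin (n+1) → ℝ) :
    (Set.univ.pi fun _ : Fin (n+1) => Set.Ioi (0:ℝ)).indicator
        (fun u : Fin (n+1) → ℝ => ∏ k, Real.exp (-(c k * u k)))
      = fun u => ∏ k, (Set.Ioi (0:ℝ)).indicator (fun x => Real.exp (-(c k * x))) (u k) := by
  funext u
  by_cases hu : u ∈ Set.univ.pi fun _ : Fin (n+1) => Set.Ioi (0:ℝ)
  · rw [Set.indicator_of_mem hu]
    exact (Finset.prod_congr rfl fun k _ => by
      rw [Set.indicator_of_mem (hu k (Set.mem_univ k))]).symm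
  · rw [Set.indicator_of_notMem hu]
    symm
    rw [Set.mem_pi] at hu
    push_neg at hu
    obtain ⟨k, -, hk⟩ := hu
    apply Finset.prod_eq_zero (Finset.mem_univ k)
    rw [Set.indicator_of_notMem hk]

lemma integral_orthant_exp (c : Fin (n+1) → ℝ) (hc : ∀ k, 0 < c k) :
    ∫ u in Set.univ.pi (fun _ : Fin (n+1) => Set.Ioi (0:ℝ)),
      ∏ k, Real.exp (-(c k * u k)) = ∏ k, (c k)⁻¹ := by
  rw [← integral_indicator (MeasurableSet.univ_pi (fun _ => measurableSet_Ioi))]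
  rw [indicator_pi_prod c]
  rw [MeasureTheory.integral_fintype_prod_volume_eq_prod (ι := Fin (n+1))
    (fun k x => (Set.Ioi (0:ℝ)).indicator (fun x => Real.exp (-(c k * x))) x)]
  exact Finset.prod_congr rfl fun k _ => by
    rw [integral_indicator measurableSet_Ioi, integral_exp_neg_mul_Ioi_zero (hc k)]

lemma integrableOn_orthant_exp (c : Fin (n+1) → ℝ) (hc : ∀ k, 0 < c k) (r : ℝ) :
    IntegrableOn (fun u : Fin (n+1) → ℝ => r * ∏ k, Real.exp (-(c k * u k)))
      (Set.univ.pi fun _ : Fin (n+1) => Set.Ioi (0:ℝ)) := by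
  apply Integrable.const_mul
  have h1 : Integrable (fun u : Fin (n+1) → ℝ =>
      ∏ k, (Set.Ioi (0:ℝ)).indicator (fun x => Real.exp (-(c k * x))) (u k)) :=
    Integrable.fintype_prod (fun k => integrable_indicator_exp (hc k))
  apply h1.integrableOn.congr_fun ?_ (MeasurableSet.univ_pi (fun _ => measurableSet_Ioi))
  intro u hu
  exact Finset.prod_congr rfl fun k _ => by rw [Set.indicator_of_mem (hu k (Set.mem_univ k))]

end Analysis

/-! ### Density along Phi -/

section Density

variable {n : ℕ} {P : Fin n → Fin n → Prop} {Q : Option (Fin n) → Option (Fin n) → Prop}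

lemma liftRel_irrefl (hirr : ∀ i, ¬ P i i) : ∀ a, ¬ liftRel P a a := by
  rintro (_|i) h
  · simp [liftRel] at h
  · exact hirr i h

lemma preF_ideal (href : ∀ a b, liftRel P a b → Q a b)
    {σ : Fin (n+1) ≃ Option (Fin n)} (hσ : σ ∈ extSet Q) (j : ℕ) :
    IsOrderIdeal (liftRel P) (preF σ j) := by
  intro p q hpq hq
  rw [mem_preF] at hq ⊢
  have h1 : σ.symm p < σ.symm q := mem_extSet.mp hσ p q (href p q hpq)
  have h2 : (σ.symm p : ℕ) < (σ.symm q : ℕ) := h1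
  omega

lemma mem_exit_preF (hirr : ∀ i, ¬ P i i) (href : ∀ a b, liftRel P a b → Q a b)
    {σ : Fin (n+1) ≃ Option (Fin n)} (hσ : σ ∈ extSet Q) (a : Option (Fin n)) (j : ℕ) :
    a ∈ exitSet (liftRel P) (preF σ j) ↔
      (j ≤ (σ.symm a : ℕ) ∧ ∀ b, liftRel P b a → (σ.symm b : ℕ) < j) := by
  rw [mem_exitSet_iff (liftRel_irrefl hirr) (preF_ideal href hσ j)]
  constructor
  · rintro ⟨h1, h2⟩
    rw [mem_preF, not_lt] at h1
    exact ⟨h1, fun b hb => mem_preF.mp (h2 b hb)⟩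
  · rintro ⟨h1, h2⟩
    refine ⟨?_, fun b hb => mem_preF.mpr (h2 b hb)⟩
    rw [mem_preF, not_lt]
    exact h1

lemma sigma_mem_exit_preF (hirr : ∀ i, ¬ P i i) (href : ∀ a b, liftRel P a b → Q a b)
    {σ : Fin (n+1) ≃ Option (Fin n)} (hσ : σ ∈ extSet Q) (k : Fin (n+1)) :
    σ k ∈ exitSet (liftRel P) (preF σ (k : ℕ)) := by
  rw [mem_exit_preF hirr href hσ]
  constructor
  · rw [σ.symm_apply_apply]
  · intro b hb
    have h1 : σ.symm b < σ.symm (σ k) := mem_extSet.mp hσ b (σ k) (href b (σ k) hb)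
    rw [σ.symm_apply_apply] at h1
    exact h1

lemma rateSum_exit_pos (hirr : ∀ i, ¬ P i i) (href : ∀ a b, liftRel P a b → Q a b)
    {σ : Fin (n+1) ≃ Option (Fin n)} (hσ : σ ∈ extSet Q)
    {lam : Option (Fin n) → ℝ} (hlam : ∀ a, 0 < lam a) (k : Fin (n+1)) :
    0 < rateSum lam (exitSet (liftRel P) (preF σ (k : ℕ))) := by
  rw [rateSum]
  exact Finset.sum_pos (fun j _ => hlam j) ⟨σ k, sigma_mem_exit_preF hirr href hσ k⟩

lemma density_Phi (hirr : ∀ i, ¬ P i i) (href : ∀ a b, liftRel P a b → Q a b)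
    {σ : Fin (n+1) ≃ Option (Fin n)} (hσ : σ ∈ extSet Q)
    (lam : Option (Fin n) → ℝ)
    (u : Fin (n+1) → ℝ) (hu : ∀ k, 0 < u k) :
    ctcbnDensity (liftRel P) lam (Phi σ u) =
      (∏ a, lam a) *
        ∏ k : Fin (n+1),
          Real.exp (-(rateSum lam (exitSet (liftRel P) (preF σ (k : ℕ))) * u k)) := by
  classical
  set t : Option (Fin n) → ℝ := ⇑(Phi σ) u with ht
  have hmono : StrictMono (fun k => t (σ k)) := Phi_strictMono σ u hu
  have hpos : ∀ a, 0 < t a := Phi_pos σ u hu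
  have hQlt : ∀ a b : Option (Fin n), σ.symm a < σ.symm b → t a < t b := by
    intro a b h
    have h2 := hmono h
    simpa [σ.apply_symm_apply] using h2
  have hcond : ∀ a, maxPa (liftRel P) t a < t a := by
    intro a
    rw [maxPa_lt_iff]
    exact ⟨hpos a, fun b hb => hQlt b a (mem_extSet.mp hσ b a (href b a hb))⟩
  have key : ∀ a, t a - maxPa (liftRel P) t a
      = ∑ k ∈ Finset.univ.filter
          (fun k : Fin (n+1) => a ∈ exitSet (liftRel P) (preF σ (k:ℕ))), u k := by
    intro a
    by_cases hpar : ∃ b, liftRel P b a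
    · obtain ⟨b0, hb0⟩ := hpar
      have hparne : (Finset.univ.filter (fun b => liftRel P b a)).Nonempty :=
        ⟨b0, by simp [hb0]⟩
      have hposne : ((Finset.univ.filter (fun b => liftRel P b a)).image
          (fun b => σ.symm b)).Nonempty := hparne.image _
      set K := ((Finset.univ.filter (fun b => liftRel P b a)).image
          (fun b => σ.symm b)).max' hposne with hK
      obtain ⟨bstar, hbstar, hbstarK⟩ := Finset.mem_image.mp (Finset.max'_mem _ hposne)
      rw [← hK] at hbstarK
      have hbstarR : liftRel P bstar a := by simpa using hbstar
      have hKlt : K < σ.symm a := by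
        rw [← hbstarK]; exact mem_extSet.mp hσ bstar a (href _ _ hbstarR)
      have htb : t bstar = t (σ K) := by rw [← hbstarK, σ.apply_symm_apply]
      have hmax : maxPa (liftRel P) t a = t (σ K) := by
        rw [maxPa_eq_max']
        apply le_antisymm
        · apply Finset.max'_le
          intro y hy
          rcases Finset.mem_insert.1 hy with rfl | hy
          · exact (hpos _).le
          · obtain ⟨b, hb, rfl⟩ := Finset.mem_image.1 hy
            have h1 : σ.symm b ≤ K := by
              rw [hK]; exact Finset.le_max' _ _ (Finset.mem_image_of_mem _ hb)
            have h2 := hmono.monotone h1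
            simpa [σ.apply_symm_apply] using h2
        · apply Finset.le_max'
          apply Finset.mem_insert_of_mem
          rw [← htb]
          exact Finset.mem_image_of_mem t hbstar
      have hfilter : Finset.univ.filter
            (fun k : Fin (n+1) => a ∈ exitSet (liftRel P) (preF σ (k:ℕ)))
          = Finset.Ioc K (σ.symm a) := by
        ext k
        rw [Finset.mem_filter, Finset.mem_Ioc, mem_exit_preF hirr href hσ]
        constructor
        · rintro ⟨-, hle, hall⟩
          have h1 := hall bstar hbstarR
          rw [hbstarK] at h1
          exact ⟨h1, hle⟩
        · rintro ⟨hKk, hka⟩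
          refine ⟨Finset.mem_univ _, hka, fun b hb => ?_⟩
          have h1 : σ.symm b ≤ K :=
            Finset.le_max' _ _ (Finset.mem_image_of_mem _ (by simp [hb]))
          exact lt_of_le_of_lt h1 hKk
      have hsplit : Finset.Iic (σ.symm a) = Finset.Iic K ∪ Finset.Ioc K (σ.symm a) := by
        ext j
        simp only [Finset.mem_Iic, Finset.mem_union, Finset.mem_Ioc, Fin.le_def, Fin.lt_def]
        have := (Fin.lt_def.mp hKlt)
        omega
      have hdisj : Disjoint (Finset.Iic K) (Finset.Ioc K (σ.symm a)) := by
        rw [Finset.disjoint_left]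
        intro j hj1 hj2
        rw [Finset.mem_Iic] at hj1
        rw [Finset.mem_Ioc] at hj2
        exact absurd (lt_of_le_of_lt hj1 hj2.1) (lt_irrefl j)
      have hta : t a = ∑ j ∈ Finset.Iic (σ.symm a), u j := Phi_apply σ u a
      have htK : t (σ K) = ∑ j ∈ Finset.Iic K, u j := Phi_apply' σ u K
      rw [hfilter, hmax, hta, htK, hsplit, Finset.sum_union hdisj]
      ring
    · push_neg at hpar
      have hmax : maxPa (liftRel P) t a = 0 := by
        rw [maxPa_eq_max']
        have h0 : (Finset.univ.filter fun b => liftRel P b a) = ∅ :=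
          Finset.filter_eq_empty_iff.mpr (fun b _ => hpar b)
        rw [h0]
        simp
      have hfilter : Finset.univ.filter
            (fun k : Fin (n+1) => a ∈ exitSet (liftRel P) (preF σ (k:ℕ)))
          = Finset.Iic (σ.symm a) := by
        ext k
        rw [Finset.mem_filter, Finset.mem_Iic, mem_exit_preF hirr href hσ]
        constructor
        · rintro ⟨-, hle, -⟩; exact hle
        · intro h; exact ⟨Finset.mem_univ _, h, fun b hb => absurd hb (hpar b)⟩
      have hta : t a = ∑ j ∈ Finset.Iic (σ.symm a), u j := Phi_apply σ u a
      rw [hmax, hfilter, sub_zero, hta]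
  rw [ctcbnDensity, if_pos hcond, Finset.prod_mul_distrib]
  congr 1
  rw [← Real.exp_sum, ← Real.exp_sum]
  congr 1
  have hsum : ∑ a, lam a * (t a - maxPa (liftRel P) t a)
      = ∑ k : Fin (n+1),
          rateSum lam (exitSet (liftRel P) (preF σ (k : ℕ))) * u k := by
    calc ∑ a, lam a * (t a - maxPa (liftRel P) t a)
        = ∑ a, ∑ k : Fin (n+1),
            (if a ∈ exitSet (liftRel P) (preF σ (k:ℕ)) then lam a * u k else 0) := by
          refine Finset.sum_congr rfl fun a _ => ?_
          rw [key a, Finset.mul_sum, Finset.sum_filter]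
      _ = ∑ k : Fin (n+1), ∑ a,
            (if a ∈ exitSet (liftRel P) (preF σ (k:ℕ)) then lam a * u k else 0) :=
          Finset.sum_comm
      _ = ∑ k : Fin (n+1),
            rateSum lam (exitSet (liftRel P) (preF σ (k : ℕ))) * u k := by
          refine Finset.sum_congr rfl fun k _ => ?_
          rw [rateSum, Finset.sum_mul, ← Finset.sum_filter, Finset.filter_univ_mem]
  calc ∑ a, -lam a * (t a - maxPa (liftRel P) t a)
      = -∑ a, lam a * (t a - maxPa (liftRel P) t a) := by
        rw [← Finset.sum_neg_distrib]
        exact Finset.sum_congr rfl fun a _ => by ring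
    _ = -∑ k : Fin (n+1), rateSum lam (exitSet (liftRel P) (preF σ (k : ℕ))) * u k := by
        rw [hsum]
    _ = ∑ k : Fin (n+1), -(rateSum lam (exitSet (liftRel P) (preF σ (k : ℕ))) * u k) := by
        rw [← Finset.sum_neg_distrib]

end Density

/-! ### Main assembly -/

section Main

variable {n : ℕ} {P : Fin n → Fin n → Prop} {Q : Option (Fin n) → Option (Fin n) → Prop}

lemma density_comp_Phi_eqOn (hirr : ∀ i, ¬ P i i) (href : ∀ a b, liftRel P a b → Q a b)
    {σ : Fin (n+1) ≃ Option (Fin n)} (hσ : σ ∈ extSet Q) (lam : Option (Fin n) → ℝ) :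
    Set.EqOn (fun u => ctcbnDensity (liftRel P) lam ((Phi σ) u))
      (fun u => (∏ a, lam a) * ∏ k : Fin (n+1),
        Real.exp (-(rateSum lam (exitSet (liftRel P) (preF σ (k:ℕ))) * u k)))
      (Set.univ.pi fun _ : Fin (n+1) => Set.Ioi (0:ℝ)) := by
  intro u hu
  have hu' : ∀ k, 0 < u k := fun k => hu k (Set.mem_univ k)
  exact density_Phi hirr href hσ lam u hu'

lemma integral_sortedRegion_eq (hirr : ∀ i, ¬ P i i) (href : ∀ a b, liftRel P a b → Q a b)
    {σ : Fin (n+1) ≃ Option (Fin n)} (hσ : σ ∈ extSet Q)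
    {lam : Option (Fin n) → ℝ} (hlam : ∀ a, 0 < lam a) :
    (∫ t in sortedRegion σ, ctcbnDensity (liftRel P) lam t)
      = (∏ a, lam a) *
          ∏ k : Fin (n+1), (rateSum lam (exitSet (liftRel P) (preF σ (k:ℕ))))⁻¹ := by
  have hemb := (Phi σ).measurableEmbedding
  have h1 := (mp_Phi σ).setIntegral_preimage_emb hemb
    (ctcbnDensity (liftRel P) lam) (sortedRegion σ)
  rw [← h1, Phi_preimage]
  have hset : MeasurableSet (Set.univ.pi fun _ : Fin (n+1) => Set.Ioi (0:ℝ)) :=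
    MeasurableSet.univ_pi fun _ => measurableSet_Ioi
  rw [setIntegral_congr_fun hset (density_comp_Phi_eqOn hirr href hσ lam)]
  rw [MeasureTheory.integral_const_mul]
  rw [integral_orthant_exp _ (fun k => rateSum_exit_pos hirr href hσ hlam k)]

lemma integrableOn_sortedRegion (hirr : ∀ i, ¬ P i i) (href : ∀ a b, liftRel P a b → Q a b)
    {σ : Fin (n+1) ≃ Option (Fin n)} (hσ : σ ∈ extSet Q)
    {lam : Option (Fin n) → ℝ} (hlam : ∀ a, 0 < lam a) :
    IntegrableOn (ctcbnDensity (liftRel P) lam) (sortedRegion σ) := by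
  have hemb := (Phi σ).measurableEmbedding
  rw [← (mp_Phi σ).integrableOn_comp_preimage hemb, Phi_preimage]
  have hset : MeasurableSet (Set.univ.pi fun _ : Fin (n+1) => Set.Ioi (0:ℝ)) :=
    MeasurableSet.univ_pi fun _ => measurableSet_Ioi
  have h2 := integrableOn_orthant_exp
    (fun k => rateSum lam (exitSet (liftRel P) (preF σ (k:ℕ))))
    (fun k => rateSum_exit_pos hirr href hσ hlam k) (∏ a, lam a)
  exact h2.congr_fun (density_comp_Phi_eqOn hirr href hσ lam).symm hset

lemma pos_eq_card {σ : Fin (n+1) ≃ Option (Fin n)} {t : Option (Fin n) → ℝ}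
    (h : StrictMono (fun k => t (σ k))) (a : Option (Fin n)) :
    ((σ.symm a : Fin (n+1)) : ℕ) = (Finset.univ.filter fun b => t b < t a).card := by
  classical
  have himg : (Finset.univ.filter fun b => t b < t a)
      = (Finset.univ.filter fun k : Fin (n+1) => (k:ℕ) < (σ.symm a : ℕ)).image σ := by
    ext b
    simp only [Finset.mem_filter, Finset.mem_univ, true_and, Finset.mem_image]
    constructor
    · intro hb
      refine ⟨σ.symm b, ?_, σ.apply_symm_apply b⟩
      have h2 : t (σ (σ.symm b)) < t (σ (σ.symm a)) := by
        rwa [σ.apply_symm_apply, σ.apply_symm_apply]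
      exact h.lt_iff_lt.mp h2
    · rintro ⟨k, hk, rfl⟩
      have hklt : k < σ.symm a := hk
      have h2 := h hklt
      simpa [σ.apply_symm_apply] using h2
  rw [himg, Finset.card_image_of_injective _ σ.injective,
    card_filter_val_lt (by omega)]

lemma sortedRegion_disjoint :
    (↑(extSet Q) : Set (Fin (n+1) ≃ Option (Fin n))).Pairwise
      (Function.onFun Disjoint (sortedRegion (n := n))) := by
  intro σ _ σ' _ hne
  rw [Function.onFun, Set.disjoint_left]
  intro t ht ht'
  apply hne
  have h1 := ht.1
  have h2 := ht'.1
  have hsymm : ∀ a, σ.symm a = σ'.symm a := by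
    intro a
    have e1 := pos_eq_card h1 a
    have e2 := pos_eq_card h2 a
    exact Fin.ext (by rw [e1, e2])
  have hs : σ.symm = σ'.symm := Equiv.ext hsymm
  calc σ = σ.symm.symm := rfl
  _ = σ'.symm.symm := by rw [hs]
  _ = σ' := rfl

lemma sortedRegion_subset_W {σ : Fin (n+1) ≃ Option (Fin n)} (hσ : σ ∈ extSet Q) :
    sortedRegion σ ⊆ {t : Option (Fin n) → ℝ | (∀ a, 0 < t a) ∧ ∀ a b, Q a b → t a < t b} := by
  intro t ht
  constructor
  · intro a
    have hm := ht.1.monotone (Fin.zero_le (σ.symm a))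
    calc (0:ℝ) < t (σ 0) := ht.2
    _ ≤ t (σ (σ.symm a)) := hm
    _ = t a := by rw [σ.apply_symm_apply]
  · intro a b hab
    have h1 := ht.1 (mem_extSet.mp hσ a b hab)
    simpa [σ.apply_symm_apply] using h1

lemma exists_sort {t : Option (Fin n) → ℝ}
    (htW : t ∈ {t : Option (Fin n) → ℝ | (∀ a, 0 < t a) ∧ ∀ a b, Q a b → t a < t b})
    (htinj : Function.Injective t) :
    ∃ σ ∈ extSet Q, t ∈ sortedRegion σ := by
  have hcard : Fintype.card (Option (Fin n)) = n + 1 := by simp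
  let e0 : Fin (n+1) ≃ Option (Fin n) := (Fintype.equivFinOfCardEq hcard).symm
  let t' : Fin (n+1) → ℝ := fun k => t (e0 k)
  let τ : Equiv.Perm (Fin (n+1)) := Tuple.sort t'
  have hmono : Monotone (t' ∘ τ) := Tuple.monotone_sort t'
  have hinj : Function.Injective (t' ∘ τ) :=
    (htinj.comp e0.injective).comp τ.injective
  have hsm : StrictMono (t' ∘ τ) := hmono.strictMono_of_injective hinj
  refine ⟨τ.trans e0, ?_, ?_, ?_⟩
  · rw [mem_extSet]
    intro a b hab
    have hlt : t a < t b := htW.2 a b hab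
    set σ := τ.trans e0 with hσdef
    have hlt2 : (t' ∘ τ) (σ.symm a) < (t' ∘ τ) (σ.symm b) := by
      show t (e0 (τ (σ.symm a))) < t (e0 (τ (σ.symm b)))
      have ha : e0 (τ (σ.symm a)) = a := σ.apply_symm_apply a
      have hb : e0 (τ (σ.symm b)) = b := σ.apply_symm_apply b
      rwa [ha, hb]
    exact hsm.lt_iff_lt.mp hlt2
  · exact hsm
  · exact htW.1 _

lemma null_noninj :
    (volume : Measure (Option (Fin n) → ℝ)) {t | ¬ Function.Injective t} = 0 := by
  have hsub : {t : Option (Fin n) → ℝ | ¬ Function.Injective t}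
      ⊆ ⋃ (p : Option (Fin n) × Option (Fin n)) (_ : p.1 ≠ p.2), {t | t p.1 = t p.2} := by
    intro t ht
    simp only [Function.Injective, not_forall, Set.mem_setOf_eq] at ht
    obtain ⟨a, b, hab, hne⟩ := ht
    exact Set.mem_iUnion.mpr ⟨(a, b), Set.mem_iUnion.mpr ⟨hne, hab⟩⟩
  apply measure_mono_null hsub
  apply measure_iUnion_null
  intro p
  apply measure_iUnion_null
  intro hne
  have hsub2 : {t : Option (Fin n) → ℝ | t p.1 = t p.2}
      ⊆ (LinearMap.ker ((LinearMap.proj p.1 : (Option (Fin n) → ℝ) →ₗ[ℝ] ℝ)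
          - LinearMap.proj p.2) : Submodule ℝ (Option (Fin n) → ℝ)) := by
    intro t ht
    simp only [Set.mem_setOf_eq] at ht
    simp only [SetLike.mem_coe, LinearMap.mem_ker, LinearMap.sub_apply, LinearMap.proj_apply,
      sub_eq_zero]
    exact ht
  apply measure_mono_null hsub2
  apply Measure.addHaar_submodule
  intro htop
  have h1 : Pi.single p.1 (1:ℝ) ∈ (⊤ : Submodule ℝ (Option (Fin n) → ℝ)) := Submodule.mem_top
  rw [← htop] at h1
  simp only [LinearMap.mem_ker, LinearMap.sub_apply, LinearMap.proj_apply, sub_eq_zero] at h1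
  rw [Pi.single_eq_same, Pi.single_eq_of_ne (Ne.symm hne)] at h1
  exact one_ne_zero (α := ℝ) h1

end Main



/-- The probability that a CT-CBN sample from `P_s` is compatible with a refinement `Q`:
`∫_{t compatible with Q} f_{P_s,λ}(t) dt
  = λ_s λ_1 ⋯ λ_n Σ_{C ∈ 𝒞(J(Q))} ∏_{k=0}^n 1/λ_{Exit(C_k)}`,
where `Exit` is taken with respect to `P_s`. -/
theorem stmt11 {n : ℕ} (P : Fin n → Fin n → Prop)
    (hirr : ∀ i, ¬ P i i) (htrans : ∀ i j k, P i j → P j k → P i k)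
    (lam : Option (Fin n) → ℝ) (hlam : ∀ a, 0 < lam a)
    (Q : Option (Fin n) → Option (Fin n) → Prop)
    (hQirr : ∀ a, ¬ Q a a) (hQtrans : ∀ a b c, Q a b → Q b c → Q a c)
    (href : ∀ a b, liftRel P a b → Q a b) :
    (∫ t in {t : Option (Fin n) → ℝ | (∀ a, 0 < t a) ∧ ∀ a b, Q a b → t a < t b},
        ctcbnDensity (liftRel P) lam t) =
      (∏ a, lam a) *
        ∑ C ∈ maxChainsJ Q,
          ∏ k : Fin (n + 1), (rateSum lam (exitSet (liftRel P) (C k.castSucc)))⁻¹ := by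

  classical
  set W : Set (Option (Fin n) → ℝ) :=
    {t | (∀ a, 0 < t a) ∧ ∀ a b, Q a b → t a < t b} with hWdef
  have hae : W =ᵐ[volume] ⋃ σ ∈ extSet Q, sortedRegion σ := by
    rw [MeasureTheory.ae_eq_set]
    constructor
    · refine measure_mono_null ?_ null_noninj
      intro t ht
      simp only [Set.mem_diff] at ht
      obtain ⟨htW, htU⟩ := ht
      simp only [Set.mem_setOf_eq]
      intro htinj
      obtain ⟨σ, hσ, hmem⟩ := exists_sort htW htinj
      exact htU (Set.mem_biUnion hσ hmem)
    · have : (⋃ σ ∈ extSet Q, sortedRegion σ) \ W = ∅ := by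
        rw [Set.diff_eq_empty]
        intro t ht
        obtain ⟨σ, hσ, hmem⟩ := Set.mem_iUnion₂.mp ht
        exact sortedRegion_subset_W hσ hmem
      rw [this]
      exact measure_empty
  rw [setIntegral_congr_set hae]
  rw [integral_biUnion_finset (extSet Q) (fun σ _ => measurableSet_sortedRegion σ)
    sortedRegion_disjoint
    (fun σ hσ => integrableOn_sortedRegion hirr href hσ hlam)]
  rw [sum_chains_eq_sum_ext hQirr]
  rw [Finset.mul_sum]
  apply Finset.sum_congr rfl
  intro σ hσ
  rw [integral_sortedRegion_eq hirr href hσ hlam]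
  congr 1
end

section
/- Let P be a finite poset on [n], P_s = P ∪ {s}, λ ∈ ℝ^{{s}∪[n]}_{>0}, and Q a partial order on {s} ∪ [n] refining P_s. Define recursively, for S an order ideal of Q, P_S = Σ_{j ∈ S : S∖{j} ∈ J(Q)} (λ_j / λ_{Exit(S∖{j})}) · P_{S∖{j}} with initial condition P_∅ = 1, where Exit is taken with respect to P_s. Then P_{{s} ∪ [n]} = λ_s λ_1 ⋯ λ_n · Σ_{C ∈ 𝒞(J(Q))} ∏_{k=0}^{n} 1/λ_{Exit(C_k)}, i.e., the recursion computes the probability that a CT-CBN sample from P_s is compatible with Q. -/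
open MeasureTheory

open scoped Classical in
/-- The recursively defined quantities
`P_S = Σ_{j ∈ S : S∖{j} ∈ J(Q)} (λ_j / λ_{Exit(S∖{j})}) P_{S∖{j}}`, `P_∅ = 1`,
where `Exit` is taken with respect to the poset `R = P_s` and the ideals with respect to the
refinement `Q`. -/
noncomputable def Pval {n : ℕ} (R Q : Option (Fin n) → Option (Fin n) → Prop)
    (lam : Option (Fin n) → ℝ) (S : Finset (Option (Fin n))) : ℝ :=
  if S = ∅ then 1
  else ∑ j ∈ S.attach,
    if IsOrderIdeal Q (S.erase j.1) then
      (lam j.1 / rateSum lam (exitSet R (S.erase j.1))) * Pval R Q lam (S.erase j.1)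
    else 0
termination_by S.card
decreasing_by exact Finset.card_erase_lt_of_mem j.2


open scoped Classical
open Fin.NatCast

/-- Normalized recursion: `Pval` with the factor `λ_j` removed. -/
noncomputable def chainSum {n : ℕ} (R Q : Option (Fin n) → Option (Fin n) → Prop)
    (lam : Option (Fin n) → ℝ) (S : Finset (Option (Fin n))) : ℝ :=
  if S = ∅ then 1
  else ∑ j ∈ S.attach,
    if IsOrderIdeal Q (S.erase j.1) then
      (rateSum lam (exitSet R (S.erase j.1)))⁻¹ * chainSum R Q lam (S.erase j.1)
    else 0
termination_by S.card
decreasing_by exact Finset.card_erase_lt_of_mem j.2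

/-- Maximal chains in `J(Q)` from `∅` up to a given ideal `S`, padded with `S` above. -/
noncomputable def chainsTo {n : ℕ} (Q : Option (Fin n) → Option (Fin n) → Prop)
    (S : Finset (Option (Fin n))) : Finset (Fin (n + 2) → Finset (Option (Fin n))) :=
  Finset.univ.filter (fun C =>
    (∀ k : ℕ, k ≤ S.card → IsOrderIdeal Q (C k) ∧ (C (k : Fin (n+2))).card = k) ∧
    (∀ k : ℕ, k < S.card → C (k : Fin (n+2)) ⊆ C ((k+1 : ℕ) : Fin (n+2))) ∧
    (∀ k : Fin (n + 2), S.card ≤ (k : ℕ) → C k = S))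

lemma mem_chainsTo {n : ℕ} {Q : Option (Fin n) → Option (Fin n) → Prop}
    {S : Finset (Option (Fin n))} {C : Fin (n + 2) → Finset (Option (Fin n))} :
    C ∈ chainsTo Q S ↔
    (∀ k : ℕ, k ≤ S.card → IsOrderIdeal Q (C k) ∧ (C (k : Fin (n+2))).card = k) ∧
    (∀ k : ℕ, k < S.card → C (k : Fin (n+2)) ⊆ C ((k+1 : ℕ) : Fin (n+2))) ∧
    (∀ k : Fin (n + 2), S.card ≤ (k : ℕ) → C k = S) := by
  simp [chainsTo]

lemma card_aux {n : ℕ} (S : Finset (Option (Fin n))) : S.card ≤ n + 1 := by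
  have := Finset.card_le_univ S
  simpa [Fintype.card_option] using this

lemma ideal_of_mem_chainsTo {n : ℕ} {Q : Option (Fin n) → Option (Fin n) → Prop}
    {S : Finset (Option (Fin n))} {C : Fin (n + 2) → Finset (Option (Fin n))}
    (hC : C ∈ chainsTo Q S) : IsOrderIdeal Q S := by
  rw [mem_chainsTo] at hC
  have hcard : S.card ≤ n + 1 := card_aux S
  have hval : ((S.card : Fin (n+2)) : ℕ) = S.card :=
    Fin.val_cast_of_lt (by omega)
  have h3 := hC.2.2 (S.card : Fin (n+2)) (by rw [hval])
  have h1 := (hC.1 S.card le_rfl).1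
  rwa [h3] at h1

lemma chainsTo_empty {n : ℕ} {Q : Option (Fin n) → Option (Fin n) → Prop} :
    chainsTo Q (∅ : Finset (Option (Fin n))) = {fun _ => ∅} := by
  ext C
  rw [mem_chainsTo, Finset.mem_singleton]
  constructor
  · rintro ⟨-, -, h3⟩
    funext k
    exact h3 k (Nat.zero_le _)
  · rintro rfl
    refine ⟨fun k hk => ⟨fun p q _ hq => absurd hq (Finset.notMem_empty q),
      by simp at hk ⊢; omega⟩,
      fun k hk => by simp at hk, fun k _ => rfl⟩

lemma chainSum_eq {n : ℕ} (R Q : Option (Fin n) → Option (Fin n) → Prop)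
    (lam : Option (Fin n) → ℝ) :
    ∀ S : Finset (Option (Fin n)), IsOrderIdeal Q S →
      chainSum R Q lam S =
        ∑ C ∈ chainsTo Q S, ∏ k ∈ Finset.range S.card,
          (rateSum lam (exitSet R (C (k : Fin (n+2)))))⁻¹ := by
  intro S
  induction S using Finset.strongInduction with
  | _ S ih =>
    intro hS
    by_cases h0 : S = ∅
    · subst h0
      rw [chainSum, if_pos rfl, chainsTo_empty]
      simp
    · obtain ⟨m, hm⟩ : ∃ m, S.card = m + 1 := by
        rcases Nat.exists_eq_succ_of_ne_zero
          (fun h => h0 (Finset.card_eq_zero.mp h)) with ⟨m, hm⟩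
        exact ⟨m, hm⟩
      have hcard : S.card ≤ n + 1 := card_aux S
      have hvm : ((m : Fin (n+2)) : ℕ) = m := Fin.val_cast_of_lt (by omega)
      have hvm1 : (((m+1 : ℕ) : Fin (n+2)) : ℕ) = m + 1 := Fin.val_cast_of_lt (by omega)
      -- Basic facts about `C ↑m` for chains `C` to `S`.
      have key : ∀ C ∈ chainsTo Q S,
          C (m : Fin (n+2)) ⊆ S ∧ (C (m : Fin (n+2))).card = m := by
        intro C hC
        rw [mem_chainsTo] at hC
        have hsub := hC.2.1 m (by omega)
        have htop := hC.2.2 ((m+1 : ℕ) : Fin (n+2)) (by rw [hvm1]; omega)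
        rw [htop] at hsub
        exact ⟨hsub, (hC.1 m (by omega)).2⟩
      have keyer : ∀ C ∈ chainsTo Q S, ∀ j, j ∈ S → j ∉ C (m : Fin (n+2)) →
          C (m : Fin (n+2)) = S.erase j := by
        intro C hC j hj hj'
        refine Finset.eq_of_subset_of_card_le
          (Finset.subset_erase.mpr ⟨(key C hC).1, hj'⟩) ?_
        rw [Finset.card_erase_of_mem hj, hm, (key C hC).2]
        omega
      have step1 : ∀ C ∈ chainsTo Q S,
          (∏ k ∈ Finset.range S.card,
            (rateSum lam (exitSet R (C (k : Fin (n+2)))))⁻¹) =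
          ∑ j ∈ S.attach, if j.1 ∉ C (m : Fin (n+2)) then
            (∏ k ∈ Finset.range S.card,
              (rateSum lam (exitSet R (C (k : Fin (n+2)))))⁻¹) else 0 := by
        intro C hC
        obtain ⟨j, hjS, hjC⟩ : ∃ j ∈ S, j ∉ C (m : Fin (n+2)) := by
          by_contra h
          push_neg at h
          have hsub : S ⊆ C (m : Fin (n+2)) := fun x hx => h x hx
          have := Finset.card_le_card hsub
          rw [(key C hC).2, hm] at this
          omega
        have hfil : S.attach.filter (fun j' => j'.1 ∉ C (m : Fin (n+2)))
            = {⟨j, hjS⟩} := by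
          ext j'
          simp only [Finset.mem_filter, Finset.mem_attach, true_and,
            Finset.mem_singleton]
          rw [keyer C hC j hjS hjC]
          constructor
          · intro h
            apply Subtype.ext
            by_contra hne
            exact h (Finset.mem_erase.mpr ⟨fun he => hne (by simp [he]), j'.2⟩)
          · rintro rfl
            exact Finset.notMem_erase _ _
        rw [← Finset.sum_filter, hfil, Finset.sum_singleton]
      rw [chainSum, if_neg h0]
      have e1 : (∑ C ∈ chainsTo Q S, ∏ k ∈ Finset.range S.card,
            (rateSum lam (exitSet R (C (k : Fin (n+2)))))⁻¹)
          = ∑ j ∈ S.attach,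
              ∑ C ∈ (chainsTo Q S).filter (fun C => j.1 ∉ C (m : Fin (n+2))),
                ∏ k ∈ Finset.range S.card,
                  (rateSum lam (exitSet R (C (k : Fin (n+2)))))⁻¹ := by
        rw [Finset.sum_congr rfl step1, Finset.sum_comm]
        exact Finset.sum_congr rfl (fun j _ => (Finset.sum_filter _ _).symm)
      rw [e1]
      apply Finset.sum_congr rfl
      intro j _
      by_cases hid : IsOrderIdeal Q (S.erase j.1)
      · rw [if_pos hid, ih (S.erase j.1) (Finset.erase_ssubset j.2) hid]
        have hce : (S.erase j.1).card = m := by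
          rw [Finset.card_erase_of_mem j.2, hm]
          omega

        rw [hce, hm, Finset.mul_sum]
        symm
        refine Finset.sum_nbij'
          (fun C => fun k => if (k : ℕ) ≤ m then C k else S.erase j.1)
          (fun C => fun k => if (k : ℕ) ≤ m then C k else S)
          ?_ ?_ ?_ ?_ ?_
        · -- trunc maps into chainsTo Q (S.erase j.1)
          intro C hCf
          rw [Finset.mem_filter] at hCf
          obtain ⟨hC, hjC⟩ := hCf
          have hCm := keyer C hC j.1 j.2 hjC
          rw [mem_chainsTo] at hC
          rw [mem_chainsTo, hce]
          refine ⟨?_, ?_, ?_⟩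
          · intro k hk
            have hv : ((k : Fin (n+2)) : ℕ) = k := Fin.val_cast_of_lt (by omega)
            simp only [hv, if_pos hk]
            exact hC.1 k (by omega)
          · intro k hk
            have hv : ((k : Fin (n+2)) : ℕ) = k := Fin.val_cast_of_lt (by omega)
            have hv1 : (((k+1 : ℕ) : Fin (n+2)) : ℕ) = k + 1 :=
              Fin.val_cast_of_lt (by omega)
            simp only [hv, hv1, if_pos (by omega : k ≤ m),
              if_pos (by omega : k + 1 ≤ m)]
            exact hC.2.1 k (by omega)
          · intro k hk
            by_cases hkm : (k : ℕ) ≤ m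
            · have hkm' : (k : ℕ) = m := le_antisymm hkm hk
              have hke : k = (m : Fin (n+2)) := by
                apply Fin.ext
                rw [hvm, hkm']
              simp only [if_pos hkm, hke, hCm, ite_self]
            · simp only [if_neg hkm]
        · -- ext maps into the filter
          intro C hC'
          rw [mem_chainsTo, hce] at hC'
          have hCm' : C (m : Fin (n+2)) = S.erase j.1 := hC'.2.2 _ (by rw [hvm])
          rw [Finset.mem_filter]
          constructor
          · rw [mem_chainsTo]
            refine ⟨?_, ?_, ?_⟩
            · intro k hk
              have hv : ((k : Fin (n+2)) : ℕ) = k := Fin.val_cast_of_lt (by omega)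
              rcases Nat.lt_or_ge k (m+1) with hkm | hkm
              · simp only [hv, if_pos (by omega : k ≤ m)]
                exact hC'.1 k (by omega)
              · have hk1 : k = m + 1 := by omega
                simp only [hv, if_neg (by omega : ¬ k ≤ m)]
                exact ⟨hS, by rw [hm, hk1]⟩
            · intro k hk
              have hv : ((k : Fin (n+2)) : ℕ) = k := Fin.val_cast_of_lt (by omega)
              have hv1 : (((k+1 : ℕ) : Fin (n+2)) : ℕ) = k + 1 :=
                Fin.val_cast_of_lt (by omega)
              rcases Nat.lt_or_ge k m with hkm | hkm
              · simp only [hv, hv1, if_pos (by omega : k ≤ m),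
                  if_pos (by omega : k + 1 ≤ m)]
                exact hC'.2.1 k (by omega)
              · have hk1 : k = m := by omega
                simp only [hv, hv1, if_pos (by omega : k ≤ m),
                  if_neg (by omega : ¬ k + 1 ≤ m)]
                subst hk1
                rw [hCm']
                exact Finset.erase_subset _ _
            · intro k hk
              rw [hm] at hk
              simp only [if_neg (by omega : ¬ (k : ℕ) ≤ m)]
          · simp only [hvm, if_pos (le_refl m), hCm']
            exact Finset.notMem_erase _ _
        · -- left inverse
          intro C hCf
          rw [Finset.mem_filter] at hCf
          obtain ⟨hC, hjC⟩ := hCf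
          have hCm := keyer C hC j.1 j.2 hjC
          rw [mem_chainsTo] at hC
          funext k
          by_cases hkm : (k : ℕ) ≤ m
          · simp only [if_pos hkm]
          · simp only [if_neg hkm]
            exact (hC.2.2 k (by omega)).symm
        · -- right inverse
          intro C hC'
          rw [mem_chainsTo, hce] at hC'
          funext k
          by_cases hkm : (k : ℕ) ≤ m
          · simp only [if_pos hkm]
          · simp only [if_neg hkm]
            exact (hC'.2.2 k (by omega)).symm
        · -- values agree
          intro C hCf
          rw [Finset.mem_filter] at hCf
          obtain ⟨hC, hjC⟩ := hCf
          have hCm := keyer C hC j.1 j.2 hjC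
          rw [Finset.prod_range_succ, hCm, mul_comm]
          congr 1
          apply Finset.prod_congr rfl
          intro k hk
          rw [Finset.mem_range] at hk
          have hv : ((k : Fin (n+2)) : ℕ) = k := Fin.val_cast_of_lt (by omega)
          congr 1
          simp only [hv, if_pos (by omega : k ≤ m)]
      · rw [if_neg hid]
        have hfe : (chainsTo Q S).filter (fun C => j.1 ∉ C (m : Fin (n+2))) = ∅ := by
          apply Finset.eq_empty_of_forall_notMem
          intro C hCf
          rw [Finset.mem_filter] at hCf
          obtain ⟨hC, hjC⟩ := hCf
          have hCm := keyer C hC j.1 j.2 hjC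
          have hidC : IsOrderIdeal Q (C (m : Fin (n+2))) := by
            rw [mem_chainsTo] at hC
            exact (hC.1 m (by omega)).1
          rw [hCm] at hidC
          exact hid hidC
        rw [hfe, Finset.sum_empty]

lemma Pval_eq_chainSum {n : ℕ} (R Q : Option (Fin n) → Option (Fin n) → Prop)
    (lam : Option (Fin n) → ℝ) (S : Finset (Option (Fin n))) :
    Pval R Q lam S = (∏ a ∈ S, lam a) * chainSum R Q lam S := by
  induction S using Finset.strongInduction with
  | _ S ih =>
    by_cases h0 : S = ∅
    · subst h0
      rw [Pval, chainSum]
      simp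
    · rw [Pval, chainSum, if_neg h0, if_neg h0, Finset.mul_sum]
      apply Finset.sum_congr rfl
      intro j _
      by_cases hid : IsOrderIdeal Q (S.erase j.1)
      · rw [if_pos hid, if_pos hid, ih _ (Finset.erase_ssubset j.2),
          ← Finset.mul_prod_erase S lam j.2]
        ring
      · rw [if_neg hid, if_neg hid, mul_zero]

lemma chainsTo_univ {n : ℕ} (Q : Option (Fin n) → Option (Fin n) → Prop) :
    chainsTo Q (Finset.univ : Finset (Option (Fin n))) = maxChainsJ Q := by
  have hcu : (Finset.univ : Finset (Option (Fin n))).card = n + 1 := by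
    simp [Fintype.card_option]
  ext C
  rw [mem_chainsTo, hcu]
  rw [maxChainsJ, Finset.mem_filter]
  simp only [Finset.mem_univ, true_and, IsMaxChainJ]
  constructor
  · rintro ⟨h1, h2, h3⟩
    refine ⟨fun k => ?_, fun k => ?_, fun k => ?_⟩
    · have := (h1 (k : ℕ) (by omega)).1
      rwa [Fin.cast_val_eq_self] at this
    · have := (h1 (k : ℕ) (by omega)).2
      rwa [Fin.cast_val_eq_self] at this
    · have := h2 (k : ℕ) (by omega)
      have e1 : (((k : ℕ) : ℕ) : Fin (n+2)) = k.castSucc := by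
        apply Fin.ext
        rw [Fin.val_cast_of_lt (by omega), Fin.coe_castSucc]
      have e2 : ((((k : ℕ) + 1) : ℕ) : Fin (n+2)) = k.succ := by
        apply Fin.ext
        rw [Fin.val_cast_of_lt (by omega), Fin.val_succ]
      rwa [e1, e2] at this
  · rintro ⟨h1, h2, h3⟩
    refine ⟨fun k hk => ⟨h1 _, ?_⟩, fun k hk => ?_, fun k hk => ?_⟩
    · rw [h2, Fin.val_cast_of_lt (by omega)]
    · have := h3 ⟨k, by omega⟩
      have e1 : ((k : ℕ) : Fin (n+2)) = Fin.castSucc ⟨k, by omega⟩ := by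
        apply Fin.ext
        rw [Fin.val_cast_of_lt (by omega), Fin.coe_castSucc]
      have e2 : (((k + 1) : ℕ) : Fin (n+2)) = Fin.succ ⟨k, by omega⟩ := by
        apply Fin.ext
        rw [Fin.val_cast_of_lt (by omega), Fin.val_succ]
      rwa [e1, e2]
    · apply Finset.eq_univ_of_card
      rw [h2 k, Fintype.card_option, Fintype.card_fin]
      omega

/-- The recursion `P_S` computes the probability that a CT-CBN sample from `P_s` is
compatible with the refinement `Q`:
`P_{{s}∪[n]} = λ_s λ_1 ⋯ λ_n Σ_{C ∈ 𝒞(J(Q))} ∏_{k=0}^n 1/λ_{Exit(C_k)}`. -/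
theorem stmt13 {n : ℕ} (P : Fin n → Fin n → Prop)
    (hirr : ∀ i, ¬ P i i) (htrans : ∀ i j k, P i j → P j k → P i k)
    (lam : Option (Fin n) → ℝ) (hlam : ∀ a, 0 < lam a)
    (Q : Option (Fin n) → Option (Fin n) → Prop)
    (hQirr : ∀ a, ¬ Q a a) (hQtrans : ∀ a b c, Q a b → Q b c → Q a c)
    (href : ∀ a b, liftRel P a b → Q a b) :
    Pval (liftRel P) Q lam Finset.univ =
      (∏ a, lam a) *
        ∑ C ∈ maxChainsJ Q,
          ∏ k : Fin (n + 1), (rateSum lam (exitSet (liftRel P) (C k.castSucc)))⁻¹ := by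
  have hSu : IsOrderIdeal Q (Finset.univ : Finset (Option (Fin n))) :=
    fun p q _ _ => Finset.mem_univ p
  have hcu : (Finset.univ : Finset (Option (Fin n))).card = n + 1 := by
    simp [Fintype.card_option]
  rw [Pval_eq_chainSum, chainSum_eq (liftRel P) Q lam _ hSu, chainsTo_univ]
  congr 1
  apply Finset.sum_congr rfl
  intro C _
  rw [hcu,
    ← Fin.prod_univ_eq_prod_range
      (fun k => (rateSum lam (exitSet (liftRel P) (C (k : Fin (n+2)))))⁻¹) (n+1)]
  apply Finset.prod_congr rfl
  intro k _
  have e1 : (((k : ℕ) : ℕ) : Fin (n+2)) = k.castSucc := by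
    apply Fin.ext
    rw [Fin.val_cast_of_lt (by omega), Fin.coe_castSucc]
  rw [e1]
end
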